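/- Let n ≥ 2 and let Z_n be the zigzag poset on elements a_1, …, a_n. Let w : C(Z_n) → C(Z_n) be any composition of chain polytope toggles τ_{a_j} in which τ_{a_1} appears exactly once, τ_{a_2} appears at most once, and the other toggles may appear any number of times (possibly zero). Then for every g ∈ C(Z_n), the Cesàro averages (1/N) Σ_{i=0}^{N−1} ( 2·(w^i(g))(a_1) + (w^i(g))(a_2) ) converge to 1 as N → ∞; i.e., the statistic g ↦ 2g(a_1) + g(a_2) is 1-mesic under the action of w on C(Z_n). Symmetrically, if τ_{a_n} appears exactly once and τ_{a_{n−1}} at most once in w, then the statistic g ↦ g(a_{n−1}) + 2g(a_n) is 1-mesic under w. -/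

import Mathlib

open scoped Classical

variable {P : Type*} [PartialOrder P]

/-- Membership in the chain polytope `C(P)`: nonnegative labels whose sum along every
chain is at most 1. -/
def InChainPolytope (P : Type*) [PartialOrder P] (g : P → ℝ) : Prop :=
  (∀ x : P, 0 ≤ g x) ∧ ∀ l : List P, l.Chain' (· < ·) → (l.map g).sum ≤ 1

/-- Membership in the order-reversing polytope `OR(P)`. -/
def InORPolytope (P : Type*) [PartialOrder P] (f : P → ℝ) : Prop :=
  (∀ x : P, 0 ≤ f x ∧ f x ≤ 1) ∧ ∀ ⦃x y : P⦄, x ≤ y → f y ≤ f x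

/-- Membership in the order-preserving polytope `OP(P)`. -/
def InOPPolytope (P : Type*) [PartialOrder P] (f : P → ℝ) : Prop :=
  (∀ x : P, 0 ≤ f x ∧ f x ≤ 1) ∧ ∀ ⦃x y : P⦄, x ≤ y → f x ≤ f y

/-- The poset `P̂`, obtained from `P` by adjoining a minimum `m̂ = ⊥` and a
maximum `M̂ = ⊤`. -/
abbrev PHat (P : Type*) := WithBot (WithTop P)

/-- The inclusion of `P` into `P̂`. -/
def toHat (x : P) : PHat P := ((x : WithTop P) : PHat P)

/-- Extension of an order-reversing labeling to `P̂`, with `f(m̂) = 1`, `f(M̂) = 0`. -/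
noncomputable def hatOR (f : P → ℝ) : PHat P → ℝ := fun y =>
  WithBot.recBotCoe 1 (fun w => WithTop.recTopCoe 0 f w) y

/-- Extension of an order-preserving labeling to `P̂`, with `f(m̂) = 0`, `f(M̂) = 1`. -/
noncomputable def hatOP (f : P → ℝ) : PHat P → ℝ := fun y =>
  WithBot.recBotCoe 0 (fun w => WithTop.recTopCoe 1 f w) y

/-- The saturated chains `x = y_1 ⋖ y_2 ⋖ ⋯ ⋖ y_k` from `x` up to a maximal element. -/
def maxChainsFrom (x : P) : Set (List P) :=
  {l | l.Chain' (· ⋖ ·) ∧ l.head? = some x ∧ ∃ z, l.getLast? = some z ∧ IsMax z}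

/-- The saturated chains `y_1 ⋖ ⋯ ⋖ y_k = x` from a minimal element up to `x`. -/
def maxChainsTo (x : P) : Set (List P) :=
  {l | l.Chain' (· ⋖ ·) ∧ (∃ a, l.head? = some a ∧ IsMin a) ∧ l.getLast? = some x}

/-- The maximal chains of `P` containing `e`. -/
def maxChainsThru (e : P) : Set (List P) :=
  {l | l.Chain' (· ⋖ ·) ∧ (∃ a, l.head? = some a ∧ IsMin a) ∧
    (∃ z, l.getLast? = some z ∧ IsMax z) ∧ e ∈ l}

/-- The transfer map `OR : C(P) → OR(P)`:
`(OR g)(x) = max{ g(y_1) + ⋯ + g(y_k) | x = y_1 ⋖ ⋯ ⋖ y_k, y_k maximal }`. -/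
noncomputable def ORmap (g : P → ℝ) (x : P) : ℝ :=
  sSup ((fun l => (l.map g).sum) '' maxChainsFrom x)

/-- The transfer map `OP : C(P) → OP(P)`:
`(OP g)(x) = max{ g(y_1) + ⋯ + g(y_k) | y_1 ⋖ ⋯ ⋖ y_k = x, y_1 minimal }`. -/
noncomputable def OPmap (g : P → ℝ) (x : P) : ℝ :=
  sSup ((fun l => (l.map g).sum) '' maxChainsTo x)

/-- The inverse transfer map: `(OR⁻¹ f)(x) = f(x) - max{ f(y) | y ⋗ x in P̂ }`. -/
noncomputable def ORinv (f : P → ℝ) (x : P) : ℝ :=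
  f x - sSup {v : ℝ | ∃ y : PHat P, toHat x ⋖ y ∧ v = hatOR f y}

/-- The inverse transfer map: `(OP⁻¹ f)(x) = f(x) - max{ f(y) | y ⋖ x in P̂ }`. -/
noncomputable def OPinv (f : P → ℝ) (x : P) : ℝ :=
  f x - sSup {v : ℝ | ∃ y : PHat P, y ⋖ toHat x ∧ v = hatOP f y}

/-- The piecewise-linear order ideal toggle on the order-reversing polytope:
the label of `e` is replaced by
`max{f(y) | y ⋗ e in P̂} + min{f(y) | y ⋖ e in P̂} - f(e)`. -/
noncomputable def tPL (e : P) (f : P → ℝ) : P → ℝ :=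
  Function.update f e
    (sSup {v : ℝ | ∃ y : PHat P, toHat e ⋖ y ∧ v = hatOR f y}
      + sInf {v : ℝ | ∃ y : PHat P, y ⋖ toHat e ∧ v = hatOR f y} - f e)

/-- The piecewise-linear antichain (chain polytope) toggle: the label of `e` is replaced
by `1 - max{ Σ g(y_i) | (y_1,…,y_k) a maximal chain of P containing e }`. -/
noncomputable def tauPL (e : P) (g : P → ℝ) : P → ℝ :=
  Function.update g e (1 - sSup ((fun l => (l.map g).sum) '' maxChainsThru e))

/-- The indicator function of a subset. -/
noncomputable def ind (S : Set P) : P → ℝ := fun x => if x ∈ S then 1 else 0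

def listComp {α : Type*} (fs : List (α → α)) : α → α := fs.foldr (· ∘ ·) id

/-- The zigzag (fence) poset `Z_n` on elements `a_1, …, a_n` (here indexed by
`Fin n`, with `a_j` corresponding to `j - 1`), with order relations generated by
`a_{2i-1} < a_{2i}` and `a_{2i+1} < a_{2i}`. -/
structure Zigzag (n : ℕ) where
  val : Fin n
deriving DecidableEq

instance {n : ℕ} : PartialOrder (Zigzag n) where
  le x y := x = y ∨ ((y.val : ℕ) % 2 = 1 ∧
    ((x.val : ℕ) + 1 = (y.val : ℕ) ∨ (x.val : ℕ) = (y.val : ℕ) + 1))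
  le_refl x := Or.inl rfl
  le_trans x y z hxy hyz := by
    rcases hxy with rfl | hxy
    · exact hyz
    · rcases hyz with rfl | hyz
      · exact Or.inr hxy
      · exfalso; omega
  le_antisymm x y hxy hyx := by
    rcases hxy with rfl | hxy
    · rfl
    · rcases hyx with rfl | hyx
      · rfl
      · exfalso; omega

section ZigLemmas

variable {n : ℕ}

lemma zz_eq_iff {x y : Zigzag n} : x = y ↔ (x.val : ℕ) = (y.val : ℕ) := by
  cases x; cases y; simp [Zigzag.mk.injEq, Fin.ext_iff]

@[simp] lemma zz_mk_val (a : Fin n) : (Zigzag.mk a).val = a := rfl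

@[simp] lemma zz_val_mk (v : ℕ) (h : v < n) : (((⟨⟨v, h⟩⟩ : Zigzag n)).val : ℕ) = v := rfl

lemma tauPL_noteq {Q : Type*} [PartialOrder Q] {x e : Q} (h : x ≠ e) (g : Q → ℝ) :
    tauPL e g x = g x := by
  unfold tauPL
  exact Function.update_of_ne h _ _

lemma zz_le_iff {x y : Zigzag n} : x ≤ y ↔ x = y ∨ ((y.val : ℕ) % 2 = 1 ∧
    ((x.val : ℕ) + 1 = (y.val : ℕ) ∨ (x.val : ℕ) = (y.val : ℕ) + 1)) := Iff.rfl

lemma zz_lt_iff {x y : Zigzag n} : x < y ↔ ((y.val : ℕ) % 2 = 1 ∧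
    ((x.val : ℕ) + 1 = (y.val : ℕ) ∨ (x.val : ℕ) = (y.val : ℕ) + 1)) := by
  rw [lt_iff_le_and_ne]
  constructor
  · rintro ⟨h1, h2⟩
    rcases zz_le_iff.mp h1 with rfl | h
    · exact absurd rfl h2
    · exact h
  · intro h
    refine ⟨zz_le_iff.mpr (Or.inr h), ?_⟩
    rw [Ne, zz_eq_iff]; omega

lemma zz_noThree {x y z : Zigzag n} (h1 : x < y) (h2 : y < z) : False := by
  have a1 := zz_lt_iff.mp h1
  have a2 := zz_lt_iff.mp h2
  omega

lemma zz_isMin_of_lt {x y : Zigzag n} (h : x < y) : IsMin x := by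
  intro b hb
  rcases zz_le_iff.mp hb with rfl | hb'
  · exact le_refl _
  · have := zz_lt_iff.mp h
    exfalso; omega

lemma zz_isMax_of_lt {x y : Zigzag n} (h : x < y) : IsMax y := by
  intro b hb
  rcases zz_le_iff.mp hb with rfl | hb'
  · exact le_refl _
  · have := zz_lt_iff.mp h
    exfalso; omega

lemma zz_exists_pair' (hn : 2 ≤ n) (e : Zigzag n) :
    ∃ x y : Zigzag n, x < y ∧ (e = x ∨ e = y) := by
  rcases Nat.even_or_odd (e.val : ℕ) with ⟨m, hm⟩ | ⟨m, hm⟩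
  · by_cases hlt : (e.val : ℕ) + 1 < n
    · refine ⟨e, ⟨⟨(e.val : ℕ) + 1, hlt⟩⟩, ?_, Or.inl rfl⟩
      rw [zz_lt_iff]
      simp only [zz_val_mk, eq_self_iff_true, true_or, or_true, and_true, true_and]
      omega
    · have h2 : 2 ≤ (e.val : ℕ) := by have := e.val.isLt; omega
      have hlt' : (e.val : ℕ) - 1 < n := by have := e.val.isLt; omega
      refine ⟨e, ⟨⟨(e.val : ℕ) - 1, hlt'⟩⟩, ?_, Or.inl rfl⟩
      rw [zz_lt_iff]
      simp only [zz_val_mk, eq_self_iff_true, true_or, or_true, and_true, true_and]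
      omega
  · have h1 : 1 ≤ (e.val : ℕ) := by omega
    have hlt' : (e.val : ℕ) - 1 < n := by have := e.val.isLt; omega
    refine ⟨⟨⟨(e.val : ℕ) - 1, hlt'⟩⟩, e, ?_, Or.inr rfl⟩
    rw [zz_lt_iff]
    simp only [zz_val_mk, eq_self_iff_true, true_or, or_true, and_true, true_and]
    omega

lemma zz_not_min_max (hn : 2 ≤ n) (x : Zigzag n) (hmin : IsMin x) (hmax : IsMax x) :
    False := by
  obtain ⟨a, b, hab, he⟩ := zz_exists_pair' hn x
  rcases he with rfl | rfl
  · exact hab.not_ge (hmax hab.le)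
  · exact hab.not_ge (hmin hab.le)

lemma zz_covBy_iff {x y : Zigzag n} : x ⋖ y ↔ x < y := by
  constructor
  · exact CovBy.lt
  · intro h
    exact ⟨h, fun c hc1 hc2 => zz_noThree hc1 hc2⟩

lemma zz_chain_cases {l : List (Zigzag n)} (h : l.Chain' (· < ·)) :
    l = [] ∨ (∃ x, l = [x]) ∨ ∃ x y, l = [x, y] ∧ x < y := by
  match l with
  | [] => exact Or.inl rfl
  | [x] => exact Or.inr (Or.inl ⟨x, rfl⟩)
  | [x, y] =>
    refine Or.inr (Or.inr ⟨x, y, rfl, ?_⟩)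
    simpa [List.Chain', List.isChain_pair] using h
  | x :: y :: z :: t =>
    exfalso
    unfold List.Chain' at h
    rw [List.isChain_cons_cons] at h
    have h2 := h.2
    rw [List.isChain_cons_cons] at h2
    exact zz_noThree h.1 h2.1

lemma zz_mem_maxChainsThru (hn : 2 ≤ n) (e : Zigzag n) (l : List (Zigzag n)) :
    l ∈ maxChainsThru e ↔ ∃ x y, l = [x, y] ∧ x < y ∧ (e = x ∨ e = y) := by
  constructor
  · rintro ⟨hch, ⟨a, ha, hamin⟩, ⟨z, hz, hzmax⟩, hel⟩
    have hch' : l.Chain' (· < ·) := hch.imp fun a b hab => hab.lt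
    rcases zz_chain_cases hch' with rfl | ⟨x, rfl⟩ | ⟨x, y, rfl, hxy⟩
    · simp at ha
    · simp at ha hz
      exact absurd (zz_not_min_max hn x (ha ▸ hamin) (hz ▸ hzmax)) (fun h => h)
    · refine ⟨x, y, rfl, hxy, ?_⟩
      simpa using hel
  · rintro ⟨x, y, rfl, hxy, he⟩
    refine ⟨?_, ⟨x, ?_, zz_isMin_of_lt hxy⟩, ⟨y, ?_, zz_isMax_of_lt hxy⟩, ?_⟩
    · simpa [List.Chain', List.isChain_pair] using zz_covBy_iff.mpr hxy
    · rfl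
    · rfl
    · rcases he with rfl | rfl <;> simp

lemma zz_exists_pair (hn : 2 ≤ n) (e : Zigzag n) :
    ∃ x y : Zigzag n, x < y ∧ (e = x ∨ e = y) := zz_exists_pair' hn e

/-- Each toggle preserves the chain polytope. -/
lemma zz_tauPL_mem (hn : 2 ≤ n) (e : Zigzag n) (g : Zigzag n → ℝ)
    (hg : InChainPolytope (Zigzag n) g) : InChainPolytope (Zigzag n) (tauPL e g) := by
  obtain ⟨hg0, hg1⟩ := hg
  set S : Set ℝ := (fun l => (l.map g).sum) '' maxChainsThru e with hS
  have hub : ∀ s ∈ S, s ≤ 1 := by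
    rintro s ⟨l, hl, rfl⟩
    exact hg1 l (hl.1.imp fun a b hab => hab.lt)
  have hbdd : BddAbove S := ⟨1, hub⟩
  have hmem_pair : ∀ x y : Zigzag n, x < y → (e = x ∨ e = y) → g x + g y ∈ S := by
    intro x y hxy he
    refine ⟨[x, y], (zz_mem_maxChainsThru hn e _).mpr ⟨x, y, rfl, hxy, he⟩, ?_⟩
    simp
  have hne : S.Nonempty := by
    obtain ⟨x, y, hxy, he⟩ := zz_exists_pair hn e
    exact ⟨_, hmem_pair x y hxy he⟩
  have h0 : 0 ≤ sSup S := by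
    obtain ⟨s, hs⟩ := hne
    obtain ⟨l, hl, rfl⟩ := hs
    have : 0 ≤ (l.map g).sum := List.sum_nonneg (by
      intro a ha
      obtain ⟨b, _, rfl⟩ := List.mem_map.mp ha
      exact hg0 b)
    exact le_trans this (le_csSup hbdd ⟨l, hl, rfl⟩)
  have h1 : sSup S ≤ 1 := csSup_le hne hub
  have hval : tauPL e g e = 1 - sSup S := by
    simp [tauPL, hS]
  have hother : ∀ x : Zigzag n, x ≠ e → tauPL e g x = g x := fun x hx =>
    tauPL_noteq hx g
  constructor
  · intro x
    by_cases hx : x = e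
    · subst hx; rw [hval]; linarith
    · rw [hother x hx]; exact hg0 x
  · intro l hl
    rcases zz_chain_cases hl with rfl | ⟨x, rfl⟩ | ⟨x, y, rfl, hxy⟩
    · simp
    · simp only [List.map_cons, List.map_nil, List.sum_cons, List.sum_nil, add_zero]
      by_cases hx : x = e
      · subst hx; rw [hval]; linarith
      · rw [hother x hx]
        simpa using hg1 [x] (List.isChain_singleton x)
    · have hxyne : x ≠ y := ne_of_lt hxy
      simp only [List.map_cons, List.map_nil, List.sum_cons, List.sum_nil, add_zero]
      by_cases hx : x = e
      · subst hx
        have hy : y ≠ x := hxyne.symm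
        rw [hval, hother y hy]
        have hmem : g x + g y ≤ sSup S := le_csSup hbdd (hmem_pair x y hxy (Or.inl rfl))
        have := hg0 x
        linarith
      · by_cases hy : y = e
        · subst hy
          rw [hval, hother x hx]
          have hmem : g x + g y ≤ sSup S := le_csSup hbdd (hmem_pair x y hxy (Or.inr rfl))
          have := hg0 y
          linarith
        · rw [hother x hx, hother y hy]
          simpa using hg1 [x, y] (by simpa [List.Chain', List.isChain_pair] using hxy)

/-- Exact value of the toggle at an extremal element `j` whose only comparable
pair is `{j, k}`. -/
lemma zz_tauPL_at (hn : 2 ≤ n) (j k : Zigzag n)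
    (huniq : ∀ x y : Zigzag n, x < y → (j = x ∨ j = y) →
      (x = j ∧ y = k) ∨ (x = k ∧ y = j))
    (hex : j < k ∨ k < j) (g : Zigzag n → ℝ) :
    tauPL j g j = 1 - (g j + g k) := by
  have hSeq : (fun l => (l.map g).sum) '' maxChainsThru j = {g j + g k} := by
    ext s
    constructor
    · rintro ⟨l, hl, rfl⟩
      obtain ⟨x, y, rfl, hxy, hj⟩ := (zz_mem_maxChainsThru hn j l).mp hl
      rcases huniq x y hxy hj with ⟨rfl, rfl⟩ | ⟨rfl, rfl⟩
      · simp
      · simp [add_comm]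
    · rintro rfl
      rcases hex with h | h
      · exact ⟨[j, k], (zz_mem_maxChainsThru hn j _).mpr ⟨j, k, rfl, h, Or.inl rfl⟩, by simp⟩
      · exact ⟨[k, j], (zz_mem_maxChainsThru hn j _).mpr ⟨k, j, rfl, h, Or.inr rfl⟩,
          by simp [add_comm]⟩
  simp [tauPL, hSeq]

lemma listComp_nil {α : Type*} : listComp ([] : List (α → α)) = id := rfl

lemma listComp_cons {α : Type*} (f : α → α) (fs : List (α → α)) :
    listComp (f :: fs) = f ∘ listComp fs := rfl

lemma listComp_append {α : Type*} (fs gs : List (α → α)) :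
    listComp (fs ++ gs) = listComp fs ∘ listComp gs := by
  induction fs with
  | nil => rfl
  | cons f fs ih =>
    simp only [List.cons_append, listComp_cons, ih]
    rfl

lemma zz_listComp_apply_of_not_mem (u : List (Zigzag n)) (x : Zigzag n) (hx : x ∉ u)
    (g : Zigzag n → ℝ) : listComp (u.map tauPL) g x = g x := by
  induction u with
  | nil => rfl
  | cons a u ih =>
    have hxa : x ≠ a := fun h => hx (h ▸ (List.mem_cons_self : a ∈ a :: u))
    have hxu : x ∉ u := fun h => hx (List.mem_cons_of_mem a h)
    simp only [List.map_cons, listComp_cons, Function.comp_apply]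
    rw [tauPL_noteq hxa]
    exact ih hxu

lemma zz_listComp_mem (hn : 2 ≤ n) (ws : List (Zigzag n)) (g : Zigzag n → ℝ)
    (hg : InChainPolytope (Zigzag n) g) :
    InChainPolytope (Zigzag n) (listComp (ws.map tauPL) g) := by
  induction ws with
  | nil => exact hg
  | cons a ws ih =>
    simp only [List.map_cons, listComp_cons, Function.comp_apply]
    exact zz_tauPL_mem hn a _ ih

open Filter in
/-- The main homomesy lemma, for an extremal element `j` with unique partner `k`. -/
lemma zz_main (hn : 2 ≤ n) (j k : Zigzag n) (hjk : j ≠ k)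
    (huniq : ∀ x y : Zigzag n, x < y → (j = x ∨ j = y) →
      (x = j ∧ y = k) ∨ (x = k ∧ y = j))
    (hex : j < k ∨ k < j) (ws : List (Zigzag n))
    (hj : ws.count j = 1) (hk : ws.count k ≤ 1)
    (g : Zigzag n → ℝ) (hg : InChainPolytope (Zigzag n) g) :
    Tendsto (fun N : ℕ =>
        (∑ i ∈ Finset.range N,
          (2 * ((listComp (ws.map tauPL))^[i] g) j
            + ((listComp (ws.map tauPL))^[i] g) k)) / (N : ℝ))
      atTop (nhds 1) := by
  set w : (Zigzag n → ℝ) → (Zigzag n → ℝ) := listComp (ws.map tauPL) with hw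
  -- decompose ws around the unique occurrence of j
  have hjmem : j ∈ ws := by
    rw [← List.count_pos_iff]; omega
  obtain ⟨u, v, rfl⟩ := List.append_of_mem hjmem
  have hcu : u.count j = 0 ∧ v.count j = 0 := by
    rw [List.count_append, List.count_cons_self] at hj
    omega
  have hju : j ∉ u := List.count_eq_zero.mp hcu.1
  have hjv : j ∉ v := List.count_eq_zero.mp hcu.2
  have hwdec : ∀ g' : Zigzag n → ℝ,
      w g' = listComp (u.map tauPL) (tauPL j (listComp (v.map tauPL) g')) := by
    intro g'
    rw [hw]
    simp only [List.map_append, List.map_cons, listComp_append, listComp_cons]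
    rfl
  -- the coboundary H
  obtain ⟨H, hstep, hbd⟩ : ∃ H : (Zigzag n → ℝ) → ℝ,
      (∀ g' : Zigzag n → ℝ, 2 * g' j + g' k = 1 + H g' - H (w g')) ∧
      (∀ g' : Zigzag n → ℝ, InChainPolytope (Zigzag n) g' → |H g'| ≤ 2) := by
    have hbound : ∀ (g' : Zigzag n → ℝ), InChainPolytope (Zigzag n) g' →
        ∀ x : Zigzag n, 0 ≤ g' x ∧ g' x ≤ 1 := by
      intro g' hg' x
      refine ⟨hg'.1 x, ?_⟩
      simpa using hg'.2 [x] (List.isChain_singleton x)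
    by_cases hkv : k ∈ v
    · -- Case B: toggle at k happens before toggle at j
      have hku : k ∉ u := by
        intro hku'
        have h1 : 0 < u.count k := List.count_pos_iff.mpr hku'
        have h2 : 0 < v.count k := List.count_pos_iff.mpr hkv
        rw [List.count_append, List.count_cons_of_ne hjk] at hk
        omega
      refine ⟨fun g' => g' j + g' k, ?_, ?_⟩
      · intro g'
        have hwj : w g' j = 1 - (g' j + listComp (v.map tauPL) g' k) := by
          rw [hwdec g', zz_listComp_apply_of_not_mem u j hju,
            zz_tauPL_at hn j k huniq hex,
            zz_listComp_apply_of_not_mem v j hjv g']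
        have hwk : w g' k = listComp (v.map tauPL) g' k := by
          rw [hwdec g', zz_listComp_apply_of_not_mem u k hku]
          exact tauPL_noteq (Ne.symm hjk) _
        show 2 * g' j + g' k = 1 + (g' j + g' k) - (w g' j + w g' k)
        rw [hwj, hwk]; ring
      · intro g' hg'
        obtain ⟨h1a, h1b⟩ := hbound g' hg' j
        obtain ⟨h2a, h2b⟩ := hbound g' hg' k
        show |g' j + g' k| ≤ 2
        rw [abs_le]; constructor <;> linarith
    · -- Case A: toggle at k (if any) happens after toggle at j
      refine ⟨fun g' => g' j, ?_, ?_⟩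
      · intro g'
        have hwj : w g' j = 1 - (g' j + g' k) := by
          rw [hwdec g', zz_listComp_apply_of_not_mem u j hju,
            zz_tauPL_at hn j k huniq hex,
            zz_listComp_apply_of_not_mem v j hjv g',
            zz_listComp_apply_of_not_mem v k hkv g']
        show 2 * g' j + g' k = 1 + g' j - w g' j
        rw [hwj]; ring
      · intro g' hg'
        obtain ⟨h1a, h1b⟩ := hbound g' hg' j
        show |g' j| ≤ 2
        rw [abs_le]; constructor <;> linarith
  -- membership along the orbit
  have horb : ∀ i : ℕ, InChainPolytope (Zigzag n) (w^[i] g) := by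
    intro i
    induction i with
    | zero => exact hg
    | succ i ih =>
      rw [Function.iterate_succ_apply']
      exact zz_listComp_mem hn _ _ ih
  -- telescoping sum
  have hsum : ∀ N : ℕ, (∑ i ∈ Finset.range N,
      (2 * (w^[i] g) j + (w^[i] g) k)) = N + (H g - H (w^[N] g)) := by
    intro N
    have hterm : ∀ i, 2 * (w^[i] g) j + (w^[i] g) k
        = 1 + (H (w^[i] g) - H (w^[i + 1] g)) := by
      intro i
      rw [Function.iterate_succ_apply' w i g]
      have := hstep (w^[i] g)
      linarith
    calc (∑ i ∈ Finset.range N, (2 * (w^[i] g) j + (w^[i] g) k))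
        = ∑ i ∈ Finset.range N, (1 + (H (w^[i] g) - H (w^[i + 1] g))) :=
          Finset.sum_congr rfl fun i _ => hterm i
      _ = N + (H (w^[0] g) - H (w^[N] g)) := by
          rw [Finset.sum_add_distrib, Finset.sum_range_sub' (fun i => H (w^[i] g))]
          simp
      _ = N + (H g - H (w^[N] g)) := by simp
  -- the Cesàro limit
  have hnorm : ∀ᶠ N : ℕ in atTop, ‖(∑ i ∈ Finset.range N,
      (2 * (w^[i] g) j + (w^[i] g) k)) / (N : ℝ) - 1‖ ≤ 4 / (N : ℝ) := by
    filter_upwards [eventually_ge_atTop 1] with N hN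
    have hNpos : (0 : ℝ) < N := by exact_mod_cast hN
    rw [hsum N]
    have heq : ((N : ℝ) + (H g - H (w^[N] g))) / N - 1 = (H g - H (w^[N] g)) / N := by
      field_simp
      ring
    rw [heq]
    have habs : |H g - H (w^[N] g)| ≤ 4 := by
      have h1 := hbd g hg
      have h2 := hbd _ (horb N)
      calc |H g - H (w^[N] g)| ≤ |H g| + |H (w^[N] g)| := abs_sub _ _
        _ ≤ 4 := by linarith
    rw [Real.norm_eq_abs, abs_div, abs_of_pos hNpos]
    gcongr
  have h0 : Tendsto (fun N : ℕ => (∑ i ∈ Finset.range N,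
      (2 * (w^[i] g) j + (w^[i] g) k)) / (N : ℝ) - 1) atTop (nhds 0) :=
    squeeze_zero_norm' hnorm (tendsto_const_div_atTop_nhds_zero_nat 4)
  have h1 := h0.add_const 1
  simpa using h1

end ZigLemmas

open Filter in
/-- Homomesy for chain polytope toggling on zigzag posets:  if `w` is a composition of
chain polytope toggles (given by the list `ws`, applied right to left) in which
`τ_{a_1}` appears exactly once and `τ_{a_2}` at most once, then the statistic
`g ↦ 2g(a_1) + g(a_2)` is 1-mesic under `w` (its Cesàro averages along every forward
orbit converge to 1); symmetrically, if `τ_{a_n}` appears exactly once and `τ_{a_{n-1}}`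
at most once in `w`, then `g ↦ g(a_{n-1}) + 2g(a_n)` is 1-mesic under `w`. -/
theorem zigzag_chain_polytope_homomesy (n : ℕ) (hn : 2 ≤ n) :
    (∀ ws : List (Zigzag n),
      ws.count ⟨⟨0, by omega⟩⟩ = 1 →
      ws.count ⟨⟨1, by omega⟩⟩ ≤ 1 →
      ∀ g : Zigzag n → ℝ, InChainPolytope (Zigzag n) g →
        Tendsto (fun N : ℕ =>
            (∑ i ∈ Finset.range N,
              (2 * ((listComp (ws.map tauPL))^[i] g) ⟨⟨0, by omega⟩⟩
                + ((listComp (ws.map tauPL))^[i] g) ⟨⟨1, by omega⟩⟩)) / (N : ℝ))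
          atTop (nhds 1)) ∧
    (∀ ws : List (Zigzag n),
      ws.count ⟨⟨n - 1, by omega⟩⟩ = 1 →
      ws.count ⟨⟨n - 2, by omega⟩⟩ ≤ 1 →
      ∀ g : Zigzag n → ℝ, InChainPolytope (Zigzag n) g →
        Tendsto (fun N : ℕ =>
            (∑ i ∈ Finset.range N,
              (((listComp (ws.map tauPL))^[i] g) ⟨⟨n - 2, by omega⟩⟩
                + 2 * ((listComp (ws.map tauPL))^[i] g) ⟨⟨n - 1, by omega⟩⟩)) / (N : ℝ))
          atTop (nhds 1)) := by
  constructor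
  · intro ws hc1 hc2 g hg
    refine zz_main hn ⟨⟨0, by omega⟩⟩ ⟨⟨1, by omega⟩⟩ ?_ ?_ ?_ ws hc1 hc2 g hg
    · intro h
      have h2 : (0 : ℕ) = 1 := zz_eq_iff.mp h
      omega
    · intro x y hxy hj
      have h1 := zz_lt_iff.mp hxy
      have hx := x.val.isLt
      have hy := y.val.isLt
      simp only [zz_eq_iff, zz_val_mk, eq_self_iff_true, true_or, or_true, and_true, true_and] at hj ⊢
      omega
    · left
      rw [zz_lt_iff]
      simp only [zz_val_mk, eq_self_iff_true, true_or, or_true, and_true, true_and]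
  · intro ws hc1 hc2 g hg
    have hmain := zz_main hn ⟨⟨n - 1, by omega⟩⟩ ⟨⟨n - 2, by omega⟩⟩ ?_ ?_ ?_ ws hc1 hc2 g hg
    · refine hmain.congr fun N => ?_
      congr 1
      exact Finset.sum_congr rfl fun i _ => by ring
    · intro h
      have h2 : n - 1 = n - 2 := zz_eq_iff.mp h
      omega
    · intro x y hxy hj
      have h1 := zz_lt_iff.mp hxy
      have hx := x.val.isLt
      have hy := y.val.isLt
      simp only [zz_eq_iff, zz_val_mk, eq_self_iff_true, true_or, or_true, and_true, true_and] at hj ⊢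
      omega
    · rcases Nat.even_or_odd (n - 1) with ⟨m, hm⟩ | ⟨m, hm⟩
      · left
        rw [zz_lt_iff]
        simp only [zz_val_mk, eq_self_iff_true, true_or, or_true, and_true, true_and]
        omega
      · right
        rw [zz_lt_iff]
        simp only [zz_val_mk, eq_self_iff_true, true_or, or_true, and_true, true_and]
        omega
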